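/- Second derivative of the one-qubit complexity profile: the real function f(r) = −(r²/2)·arctanh(r) − (r/4)·log((1 − r²)/4) (natural logarithm) is twice differentiable at every r with 0 < r < 1, and its second derivative equals f″(r) = −r/(2(1 − r²)) − arctanh(r); in particular f″(r) < 0 for all 0 < r < 1, so f is strictly concave on (0, 1). -/

import Mathlib

/-- The inverse hyperbolic tangent. -/
noncomputable def arctanh (x : ℝ) : ℝ := (1/2) * Real.log ((1 + x) / (1 - x))

noncomputable def fC (r : ℝ) : ℝ :=
  -(r^2/2) * arctanh r - (r/4) * Real.log ((1 - r^2)/4)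

lemma hasDerivAt_arctanh {r : ℝ} (h1 : -1 < r) (h2 : r < 1) :
    HasDerivAt arctanh (1 / (1 - r^2)) r := by
  have hp : (0:ℝ) < 1 + r := by linarith
  have hm : (0:ℝ) < 1 - r := by linarith
  have hq : HasDerivAt (fun x : ℝ => (1 + x) / (1 - x))
      ((1 * (1 - r) - (1 + r) * (-1)) / (1 - r)^2) r := by
    exact HasDerivAt.div ((hasDerivAt_id r).const_add 1)
      (((hasDerivAt_id r).neg).const_add 1) hm.ne'
  have hne : (1 + r) / (1 - r) ≠ 0 := by positivity
  have := (hq.log hne).const_mul (1/2 : ℝ)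
  refine this.congr_deriv ?_
  have hsq : (1:ℝ) - r^2 ≠ 0 := by nlinarith
  field_simp
  ring

lemma hasDerivAt_logpart {r : ℝ} (h1 : -1 < r) (h2 : r < 1) :
    HasDerivAt (fun x : ℝ => Real.log ((1 - x^2)/4)) (-2 * r / (1 - r^2)) r := by
  have hpos : (0:ℝ) < 1 - r^2 := by nlinarith
  have hq : HasDerivAt (fun x : ℝ => (1 - x^2)/4) (-(2*r)/4) r := by
    have : HasDerivAt (fun x : ℝ => 1 - x^2) (-(2*r)) r := by
      exact ((hasDerivAt_pow 2 r).const_sub 1).congr_deriv (by norm_num)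
    simpa using this.div_const 4
  have hne : (1 - r^2)/4 ≠ 0 := by positivity
  have := hq.log hne
  convert this using 1
  field_simp

lemma hasDerivAt_fC {r : ℝ} (h1 : -1 < r) (h2 : r < 1) :
    HasDerivAt fC (-r * arctanh r - (1/4) * Real.log ((1 - r^2)/4)) r := by
  have hpos : (0:ℝ) < 1 - r^2 := by nlinarith
  have ha := hasDerivAt_arctanh h1 h2
  have hl := hasDerivAt_logpart h1 h2
  have h1' : HasDerivAt (fun x : ℝ => -(x^2/2) * arctanh x)
      (-(2*r/2) * arctanh r + -(r^2/2) * (1/(1-r^2))) r := by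
    have hx : HasDerivAt (fun x : ℝ => -(x^2/2)) (-(2*r/2)) r := by
      exact (((hasDerivAt_pow 2 r).div_const 2).neg).congr_deriv (by norm_num)
    exact hx.mul ha
  have h2' : HasDerivAt (fun x : ℝ => (x/4) * Real.log ((1 - x^2)/4))
      ((1/4) * Real.log ((1 - r^2)/4) + (r/4) * (-2*r/(1-r^2))) r := by
    have hx : HasDerivAt (fun x : ℝ => x/4) (1/4 : ℝ) r := by
      simpa using (hasDerivAt_id r).div_const 4
    exact hx.mul hl
  have := h1'.sub h2'
  refine this.congr_deriv ?_
  field_simp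
  ring

noncomputable def gC (r : ℝ) : ℝ := -r * arctanh r - (1/4) * Real.log ((1 - r^2)/4)

lemma hasDerivAt_gC {r : ℝ} (h1 : -1 < r) (h2 : r < 1) :
    HasDerivAt gC (-(r / (2 * (1 - r^2))) - arctanh r) r := by
  have hpos : (0:ℝ) < 1 - r^2 := by nlinarith
  have ha := hasDerivAt_arctanh h1 h2
  have hl := hasDerivAt_logpart h1 h2
  have h1' : HasDerivAt (fun x : ℝ => -x * arctanh x)
      ((-1) * arctanh r + (-r) * (1/(1-r^2))) r := by
    have hx : HasDerivAt (fun x : ℝ => -x) (-1 : ℝ) r := (hasDerivAt_id r).neg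
    exact hx.mul ha
  have h2' := (hl.const_mul (1/4 : ℝ))
  have := h1'.sub h2'
  refine this.congr_deriv ?_
  field_simp
  ring

lemma deriv_fC_eq {r : ℝ} (h1 : -1 < r) (h2 : r < 1) : deriv fC r = gC r :=
  (hasDerivAt_fC h1 h2).deriv

lemma hasDerivAt_deriv_fC {r : ℝ} (h1 : -1 < r) (h2 : r < 1) :
    HasDerivAt (deriv fC) (-(r / (2 * (1 - r^2))) - arctanh r) r := by
  have hmem : Set.Ioo (-1:ℝ) 1 ∈ nhds r := (isOpen_Ioo).mem_nhds ⟨h1, h2⟩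
  refine (hasDerivAt_gC h1 h2).congr_of_eventuallyEq ?_
  filter_upwards [hmem] with x hx
  exact deriv_fC_eq hx.1 hx.2

lemma arctanh_pos {r : ℝ} (h0 : 0 < r) (h2 : r < 1) : 0 < arctanh r := by
  have hm : (0:ℝ) < 1 - r := by linarith
  have : (1:ℝ) < (1 + r) / (1 - r) := by
    rw [lt_div_iff₀ hm]; linarith
  have := Real.log_pos this
  unfold arctanh
  positivity

/-- second derivative of the one-qubit complexity profile, its negativity,
and strict concavity of the profile on (0,1). -/
theorem second_deriv_fC :
    (∀ r : ℝ, 0 < r → r < 1 →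
      HasDerivAt (deriv fC) (-(r / (2 * (1 - r^2))) - arctanh r) r ∧
      -(r / (2 * (1 - r^2))) - arctanh r < 0) ∧
    StrictConcaveOn ℝ (Set.Ioo (0:ℝ) 1) fC := by
  have key : ∀ r : ℝ, 0 < r → r < 1 →
      HasDerivAt (deriv fC) (-(r / (2 * (1 - r^2))) - arctanh r) r ∧
      -(r / (2 * (1 - r^2))) - arctanh r < 0 := by
    intro r h0 h1
    have hm1 : (-1:ℝ) < r := by linarith
    refine ⟨hasDerivAt_deriv_fC hm1 h1, ?_⟩
    have hpos : (0:ℝ) < 1 - r^2 := by nlinarith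
    have h3 : 0 < r / (2 * (1 - r^2)) := by positivity
    have h4 := arctanh_pos h0 h1
    linarith
  refine ⟨key, ?_⟩
  apply strictConcaveOn_of_deriv2_neg (convex_Ioo 0 1)
  · intro x hx
    exact ((hasDerivAt_fC (by linarith [hx.1]) hx.2).differentiableAt).continuousAt.continuousWithinAt
  · intro x hx
    rw [interior_Ioo] at hx
    have h := key x hx.1 hx.2
    calc deriv (deriv fC) x = -(x / (2 * (1 - x^2))) - arctanh x := h.1.deriv
      _ < 0 := h.2
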